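/- Let G be a non-elementary hyperbolic group and d, d' two left-invariant hyperbolic pseudometrics quasi-isometric to word metrics, with Manhattan curves Θ_n for pairs (d_n, d'_n) and Θ for (d, d'). If there are sequences Λ_n → 1 and C_n ≥ 0 with Λ_n^{-1}d − C_n ≤ d_n ≤ Λ_n d + C_n and Λ_n^{-1}d' − C_n ≤ d'_n ≤ Λ_n d' + C_n, and all Θ_n and Θ are convex and continuously differentiable, then Θ_n converges pointwise to Θ and Θ'_n converges pointwise to Θ'. -/

import Mathlib

open Filter Set MeasureTheory Topology

noncomputable section

variable {X : Type*}

/-- The Gromov product `(x|y)_w` with respect to `d`. -/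
def gp (d : X → X → ℝ) (w x y : X) : ℝ := (d x w + d y w - d x y) / 2

/-- `d` is a pseudometric. -/
def IsPseudometric (d : X → X → ℝ) : Prop :=
  (∀ x, d x x = 0) ∧ (∀ x y, d x y = d y x) ∧ (∀ x y z, d x z ≤ d x y + d y z)

/-- `d` is `δ`-hyperbolic: the four-point Gromov product condition. -/
def GromovHyperbolic (d : X → X → ℝ) (δ : ℝ) : Prop :=
  ∀ x y z w, min (gp d w x y) (gp d w y z) - δ ≤ gp d w x z

/-- `d` is `α`-rough geodesic: any two points are joined by an `α`-rough geodesic. -/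
def RoughGeodesic (d : X → X → ℝ) (α : ℝ) : Prop :=
  ∀ x y : X, ∃ (n : ℕ) (γ : ℕ → X), γ 0 = x ∧ γ n = y ∧
    ∀ i j : ℕ, i ≤ n → j ≤ n →
      |(i : ℝ) - (j : ℝ)| - α ≤ d (γ i) (γ j) ∧ d (γ i) (γ j) ≤ |(i : ℝ) - (j : ℝ)| + α

variable {G : Type*} [Group G]

/-- Left invariance of a pseudometric on a group. -/
def LeftInvariant (d : G → G → ℝ) : Prop := ∀ g x y : G, d (g * x) (g * y) = d x y

/-- Word norm with respect to a subset `S`. -/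
def wordNorm (S : Set G) (w : G) : ℕ :=
  sInf {k : ℕ | ∃ f : Fin k → G, (∀ i, f i ∈ S) ∧ (List.ofFn f).prod = w}

/-- Word metric with respect to a subset `S`. -/
def wordDist (S : Set G) (x y : G) : ℝ := (wordNorm S (x⁻¹ * y) : ℝ)

/-- `S` is a symmetric generating set. -/
def GenSymm (S : Set G) : Prop := (∀ s ∈ S, s⁻¹ ∈ S) ∧ Subgroup.closure S = ⊤

/-- `d'` is quasi-isometric to `d` (via the identity map of `G`). -/
def QIsometric (d d' : G → G → ℝ) : Prop :=
  ∃ l1 l2 e : ℝ, 0 < l1 ∧ 0 < l2 ∧ 0 ≤ e ∧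
    ∀ x y : G, d x y / l1 - e ≤ d' x y ∧ d' x y ≤ l2 * d x y + e

/-- Membership in `D(G)`: a left-invariant hyperbolic pseudometric on `G`
quasi-isometric to a word metric w.r.t. a finite symmetric generating set. -/
def InD (d : G → G → ℝ) : Prop :=
  IsPseudometric d ∧ LeftInvariant d ∧ (∃ δ ≥ (0 : ℝ), GromovHyperbolic d δ) ∧
    ∃ S : Finset G, GenSymm (S : Set G) ∧ QIsometric (wordDist (S : Set G)) d

/-- `G` is a hyperbolic group: some word metric is Gromov hyperbolic. -/
def IsHyperbolicGroup (G : Type*) [Group G] : Prop :=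
  ∃ S : Finset G, GenSymm (S : Set G) ∧ ∃ δ ≥ (0 : ℝ), GromovHyperbolic (wordDist (S : Set G)) δ

/-- `G` is non-elementary: it is not virtually abelian. -/
def NonElementary (G : Type*) [Group G] : Prop :=
  ¬ ∃ H : Subgroup G, H.FiniteIndex ∧ ∀ a ∈ H, ∀ b ∈ H, a * b = b * a

/-- Translation length `ℓ_d(x) = lim_n d(x^n,1)/n`; by Fekete's subadditivity lemma the
limit exists and equals the infimum of `d(x^n,1)/n` over `n ≥ 1`. -/
def tlen (d : G → G → ℝ) (x : G) : ℝ :=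
  sInf {r : ℝ | ∃ n : ℕ, r = d (x ^ (n + 1)) 1 / (n + 1)}

/-- Dilation `Dil(d,d') = sup_x ℓ_d(x)/ℓ_{d'}(x)` over infinite-order elements. -/
def Dil (d d' : G → G → ℝ) : ℝ :=
  sSup {r : ℝ | ∃ x : G, ¬ IsOfFinOrder x ∧ r = tlen d x / tlen d' x}

/-- Critical exponent `h(d) = lim_n log|B_d(n)|/n` (the limit exists, so it equals
the limsup used here). -/
def hCrit (d : G → G → ℝ) : ℝ :=
  Filter.limsup (fun n : ℕ => Real.log (Set.ncard {x : G | d x 1 ≤ (n : ℝ)}) / (n : ℝ)) atTop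

/-- `Λ(d1,d2)`: the infimum of `λ1·λ2` over quasi-isometry constants between `d1,d2`. -/
def Lam (d1 d2 : G → G → ℝ) : ℝ :=
  sInf {l : ℝ | ∃ l1 l2 A : ℝ, 0 < l1 ∧ 0 < l2 ∧ 0 ≤ A ∧ l = l1 * l2 ∧
    ∀ x y : G, d2 x y / l1 - A ≤ d1 x y ∧ d1 x y ≤ l2 * d2 x y + A}

/-- The Manhattan curve of the pair `(d, d')`: `Θ(a)` is the critical exponent in `b`
of the series `Σ_{x∈G} exp(−a·d'(x,1) − b·d(x,1))`. -/
def ManhattanTheta (d d' : G → G → ℝ) (a : ℝ) : ℝ :=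
  sInf {b : ℝ | Summable (fun x : G => Real.exp (-(a * d' x 1) - b * d x 1))}

section WordNorm

variable {G : Type*} [Group G]

/-- The set of word lengths of representations of `x`. -/
def WSet (S : Set G) (x : G) : Set ℕ :=
  {k : ℕ | ∃ f : Fin k → G, (∀ i, f i ∈ S) ∧ (List.ofFn f).prod = x}

lemma wordNorm_eq_sInf (S : Set G) (x : G) : wordNorm S x = sInf (WSet S x) := rfl

lemma mem_WSet_iff_list (S : Set G) (x : G) (k : ℕ) :
    k ∈ WSet S x ↔ ∃ L : List G, (∀ g ∈ L, g ∈ S) ∧ L.prod = x ∧ L.length = k := by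
  constructor
  · rintro ⟨f, hf, hp⟩
    refine ⟨List.ofFn f, ?_, hp, List.length_ofFn⟩
    intro g hg
    obtain ⟨i, rfl⟩ := List.mem_ofFn.1 hg
    exact hf i
  · rintro ⟨L, hL, hp, hk⟩
    refine ⟨fun i => L.get (Fin.cast hk.symm i), fun i => hL _ (L.get_mem _), ?_⟩
    subst hk
    simp only [Fin.cast_refl]
    rw [show (fun i => L.get (id i)) = L.get from rfl, List.ofFn_get, hp]

lemma WSet_nonempty {S : Set G} (hS : GenSymm S) (x : G) : (WSet S x).Nonempty := by
  have hx : x ∈ Subgroup.closure S := hS.2 ▸ Subgroup.mem_top x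
  induction hx using Subgroup.closure_induction with
  | mem s hs => exact ⟨1, fun _ => s, fun _ => hs, by simp⟩
  | one => exact ⟨0, fun i => 1, fun i => i.elim0, by simp⟩
  | mul a b _ _ ha hb =>
      obtain ⟨k, hk⟩ := ha; obtain ⟨l, hl⟩ := hb
      rw [mem_WSet_iff_list] at hk hl
      obtain ⟨L, hL, hLp, hLl⟩ := hk; obtain ⟨M, hM, hMp, hMl⟩ := hl
      refine ⟨k + l, (mem_WSet_iff_list _ _ _).2 ⟨L ++ M, ?_, by simp [hLp, hMp], by simp [hLl, hMl]⟩⟩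
      intro g hg; rcases List.mem_append.1 hg with h | h
      · exact hL g h
      · exact hM g h
  | inv a _ ha =>
      obtain ⟨k, hk⟩ := ha
      rw [mem_WSet_iff_list] at hk
      obtain ⟨L, hL, hLp, hLl⟩ := hk
      refine ⟨k, (mem_WSet_iff_list _ _ _).2 ⟨(L.map fun g => g⁻¹).reverse, ?_, ?_, by simp [hLl]⟩⟩
      · intro g hg
        simp only [List.mem_reverse, List.mem_map] at hg
        obtain ⟨h, hh, rfl⟩ := hg
        exact hS.1 h (hL h hh)
      · rw [← List.prod_inv_reverse, hLp]

lemma wordNorm_mem {S : Set G} (hS : GenSymm S) (x : G) : wordNorm S x ∈ WSet S x :=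
  Nat.sInf_mem (WSet_nonempty hS x)

lemma wordNorm_le {S : Set G} {x : G} {k : ℕ} (h : k ∈ WSet S x) : wordNorm S x ≤ k :=
  Nat.sInf_le h

lemma wordNorm_one_eq (S : Set G) : wordNorm S (1 : G) = 0 :=
  Nat.le_zero.1 (wordNorm_le ((mem_WSet_iff_list _ _ _).2 ⟨[], by simp, by simp, rfl⟩))

lemma wordNorm_mul_le {S : Set G} (hS : GenSymm S) (x y : G) :
    wordNorm S (x * y) ≤ wordNorm S x + wordNorm S y := by
  obtain ⟨L, hL, hLp, hLl⟩ := (mem_WSet_iff_list _ _ _).1 (wordNorm_mem hS x)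
  obtain ⟨M, hM, hMp, hMl⟩ := (mem_WSet_iff_list _ _ _).1 (wordNorm_mem hS y)
  refine wordNorm_le ((mem_WSet_iff_list _ _ _).2 ⟨L ++ M, ?_, by simp [hLp, hMp], by simp [hLl, hMl]⟩)
  intro g hg; rcases List.mem_append.1 hg with h | h
  · exact hL g h
  · exact hM g h

/-- Comparison of word norms for two symmetric generating sets, the first finite. -/
lemma wordNorm_comparison {S : Finset G} {S' : Set G} (hS : GenSymm (S : Set G))
    (hS' : GenSymm S') :
    ∃ M : ℕ, ∀ x : G, wordNorm S' x ≤ M * wordNorm (S : Set G) x := by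
  refine ⟨S.sup (wordNorm S'), fun x => ?_⟩
  obtain ⟨L, hL, hLp, hLl⟩ := (mem_WSet_iff_list _ _ _).1 (wordNorm_mem hS x)
  rw [← hLl, ← hLp]
  clear hLp hLl
  induction L with
  | nil => simp [wordNorm_one_eq]
  | cons g T ih =>
      have hg : g ∈ S := by simpa using hL g (by simp)
      have hT : ∀ h ∈ T, h ∈ (S : Set G) := fun h hh => hL h (by simp [hh])
      calc wordNorm S' (g * T.prod) ≤ wordNorm S' g + wordNorm S' T.prod := by
              simpa using wordNorm_mul_le hS' g T.prod
        _ ≤ S.sup (wordNorm S') + S.sup (wordNorm S') * T.length :=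
              Nat.add_le_add (Finset.le_sup hg) (ih hT)
        _ = S.sup (wordNorm S') * (g :: T).length := by ring_nf; simp [Nat.mul_succ, Nat.add_comm]

end WordNorm
section Summ

variable {G : Type*} [Group G]

lemma IsPseudometric.nonneg {d : G → G → ℝ} (h : IsPseudometric d) (x y : G) : 0 ≤ d x y := by
  have h1 := h.2.2 x y x
  have h2 := h.2.1 y x
  have h3 := h.1 x
  linarith

lemma NonElementary.infinite (h : NonElementary G) : Infinite G := by
  by_contra hfin
  rw [not_infinite_iff_finite] at hfin
  refine h ⟨⊥, ?_, ?_⟩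
  · constructor
    rw [Subgroup.index_bot]
    exact Nat.card_ne_zero.2 ⟨⟨1⟩, hfin⟩
  · intro a ha b hb
    rw [Subgroup.mem_bot] at ha hb
    subst ha; subst hb; rfl

/-- A function bounded below by a positive constant on an infinite type is not summable. -/
lemma not_summable_of_lower {f : G → ℝ} [Infinite G] {ε : ℝ} (hε : 0 < ε)
    (h : ∀ x, ε ≤ f x) : ¬ Summable f := by
  intro hs
  have := hs.tendsto_cofinite_zero
  have hev : ∀ᶠ x in Filter.cofinite, |f x - 0| < ε := by
    have := Metric.tendsto_nhds.1 this ε hε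
    simpa [Real.dist_eq] using this
  rw [Filter.eventually_cofinite] at hev
  have : {x : G | ¬ |f x - 0| < ε} = Set.univ := by
    ext x; simp only [Set.mem_setOf_eq, Set.mem_univ, iff_true, not_lt, sub_zero]
    exact le_trans (h x) (le_abs_self _)
  rw [this] at hev
  exact Set.infinite_univ hev

/-- Key summability lemma: `x ↦ c * r ^ (wordNorm S x)` is summable for small `r ≥ 0`. -/
lemma summable_pow_wordNorm [DecidableEq G] {S : Finset G} (hS : GenSymm (S : Set G)) {r c : ℝ}
    (hr : 0 ≤ r) (hrc : (((insert (1:G) S : Finset G).card : ℝ)) * r < 1) :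
    Summable (fun x : G => c * r ^ (wordNorm (S : Set G) x)) := by
  classical
  have hg : Summable (fun p : (k : ℕ) × (Fin k → ↥(insert (1:G) S : Finset G)) => c * r ^ p.1) := by
    have hnn : ∀ p : (k : ℕ) × (Fin k → ↥(insert (1:G) S : Finset G)), 0 ≤ |c| * r ^ p.1 :=
      fun p => by positivity
    have key : Summable (fun p : (k : ℕ) × (Fin k → ↥(insert (1:G) S : Finset G)) =>
        |c| * r ^ p.1) := by
      rw [summable_sigma_of_nonneg hnn]
      refine ⟨fun k => Summable.of_finite, ?_⟩
      have hcong : ∀ k : ℕ, (∑' _ : Fin k → ↥(insert (1:G) S : Finset G), |c| * r ^ k)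
          = |c| * (((insert (1:G) S : Finset G).card : ℝ) * r) ^ k := by
        intro k
        rw [tsum_const, Nat.card_eq_fintype_card, Fintype.card_fun, Fintype.card_coe,
          Fintype.card_fin, nsmul_eq_mul, mul_pow]
        push_cast
        ring
      rw [funext hcong]
      exact (summable_geometric_of_lt_one (by positivity) hrc).mul_left _
    refine key.of_norm_bounded (fun p => ?_)
    rw [Real.norm_eq_abs, abs_mul, abs_pow, abs_of_nonneg hr]
  have hrep : ∀ x : G, ∃ p : (k : ℕ) × (Fin k → ↥(insert (1:G) S : Finset G)),
      p.1 = wordNorm (S : Set G) x ∧ (List.ofFn (fun i => ((p.2 i : G)))).prod = x := by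
    intro x
    obtain ⟨f, hf, hfp⟩ := wordNorm_mem hS x
    exact ⟨⟨wordNorm (S : Set G) x, fun i => ⟨f i, Finset.mem_insert_of_mem (hf i)⟩⟩, rfl, hfp⟩
  choose ι hι1 hι2 using hrep
  have hinj : Function.Injective ι := by
    intro x y hxy
    have := hι2 x
    rw [hxy, hι2 y] at this
    exact this.symm
  have := hg.comp_injective hinj
  refine this.congr (fun x => ?_)
  simp only [Function.comp_apply, hι1]

end Summ
section Theta

variable {G : Type*} [Group G]

/-- Cross comparison: `d' ≤ K d + K` at base point, for two metrics in `D(G)`. -/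
lemma InD.cross {d d' : G → G → ℝ} (hd : InD d) (hd' : InD d') :
    ∃ K : ℝ, 0 ≤ K ∧ ∀ x : G, d' x 1 ≤ K * d x 1 + K := by
  obtain ⟨pd, -, -, S, hSgen, l1, l2, e, hl1, hl2, he, hQI⟩ := hd
  obtain ⟨pd', -, -, S', hSgen', l1', l2', e', hl1', hl2', he', hQI'⟩ := hd'
  obtain ⟨M, hM⟩ := wordNorm_comparison hSgen hSgen'
  refine ⟨l2' * M * l1 + (l2' * M * l1 * e + e') + 1, by positivity, fun x => ?_⟩
  have h1 : wordDist (S : Set G) x 1 ≤ l1 * (d x 1 + e) := by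
    have := (hQI x 1).1
    have h' : wordDist (S : Set G) x 1 / l1 ≤ d x 1 + e := by linarith
    calc wordDist (S : Set G) x 1 = l1 * (wordDist (S : Set G) x 1 / l1) := by
          field_simp
      _ ≤ l1 * (d x 1 + e) := by
          exact mul_le_mul_of_nonneg_left h' hl1.le
  have h2 : d' x 1 ≤ l2' * wordDist (S' : Set G) x 1 + e' := (hQI' x 1).2
  have h3 : wordDist (S' : Set G) x 1 ≤ (M : ℝ) * wordDist (S : Set G) x 1 := by
    unfold wordDist
    exact_mod_cast Nat.cast_le.2 (hM (x⁻¹ * 1))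
  have hw0 : (0:ℝ) ≤ wordDist (S : Set G) x 1 := Nat.cast_nonneg _
  have hd0 : 0 ≤ d x 1 := pd.nonneg x 1
  have hM0 : (0:ℝ) ≤ (M:ℝ) := Nat.cast_nonneg _
  have t2 : (M:ℝ) * wordDist (S : Set G) x 1 ≤ (M:ℝ) * (l1 * (d x 1 + e)) :=
    mul_le_mul_of_nonneg_left h1 hM0
  have hchain : d' x 1 ≤ (l2' * M * l1) * d x 1 + (l2' * M * l1 * e + e') := by
    nlinarith [mul_le_mul_of_nonneg_left h3 hl2'.le, mul_le_mul_of_nonneg_left t2 hl2'.le]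
  nlinarith [hchain, mul_nonneg (by positivity : (0:ℝ) ≤ l2' * M * l1 * e + e' + 1) hd0,
    mul_nonneg (mul_nonneg hl2'.le hM0) hl1.le]

/-- Existence of a summable exponential tail for a metric in `D(G)`. -/
lemma InD.exists_summable_exp {d : G → G → ℝ} (hd : InD d) :
    ∃ β : ℝ, 0 ≤ β ∧ Summable (fun x : G => Real.exp (-β * d x 1)) := by
  classical
  obtain ⟨pd, -, -, S, hSgen, l1, l2, e, hl1, hl2, he, hQI⟩ := hd
  set N : ℕ := (insert (1:G) S : Finset G).card with hN
  have hN1 : 1 ≤ N := Finset.card_pos.2 ⟨1, Finset.mem_insert_self _ _⟩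
  have hNpos : (0:ℝ) < N := by exact_mod_cast hN1
  set β : ℝ := l1 * (Real.log N + 1) with hβ
  have hlogN : 0 ≤ Real.log N := Real.log_nonneg (by exact_mod_cast hN1)
  have hβpos : 0 < β := by positivity
  refine ⟨β, hβpos.le, ?_⟩
  set r : ℝ := Real.exp (-(β / l1)) with hr
  have hr0 : 0 ≤ r := (Real.exp_pos _).le
  have hrN : (N : ℝ) * r < 1 := by
    have : β / l1 = Real.log N + 1 := by field_simp [hβ]; exact hβ
    rw [hr, this, neg_add, Real.exp_add, Real.exp_neg, Real.exp_log hNpos]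
    rw [show (N:ℝ) * ((N:ℝ)⁻¹ * Real.exp (-1)) = ((N:ℝ) * (N:ℝ)⁻¹) * Real.exp (-1) by ring,
      mul_inv_cancel₀ (ne_of_gt hNpos), one_mul]
    rw [Real.exp_lt_one_iff]; norm_num
  have hsum : Summable (fun x : G => Real.exp (β * e) * r ^ (wordNorm (S : Set G) x)) :=
    summable_pow_wordNorm hSgen hr0 hrN
  have hsum2 : Summable (fun x : G =>
      Real.exp (β * e) * r ^ (wordNorm (S : Set G) (x⁻¹ * 1))) := by
    have hinj : Function.Injective (fun x : G => x⁻¹ * 1) := by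
      intro a b h; simpa using h
    exact (hsum.comp_injective hinj)
  refine hsum2.of_nonneg_of_le (fun x => (Real.exp_pos _).le) (fun x => ?_)
  have hlow : wordDist (S : Set G) x 1 / l1 - e ≤ d x 1 := (hQI x 1).1
  have : -β * d x 1 ≤ β * e + (wordNorm (S : Set G) (x⁻¹ * 1) : ℝ) * (-(β / l1)) := by
    have h2 : -β * d x 1 ≤ -β * (wordDist (S : Set G) x 1 / l1 - e) := by
      have := neg_le_neg (mul_le_mul_of_nonneg_left hlow hβpos.le)
      calc -β * d x 1 = -(β * d x 1) := by ring
        _ ≤ -(β * (wordDist (S : Set G) x 1 / l1 - e)) := this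
        _ = -β * (wordDist (S : Set G) x 1 / l1 - e) := by ring
    calc -β * d x 1 ≤ -β * (wordDist (S : Set G) x 1 / l1 - e) := h2
      _ = β * e + (wordDist (S : Set G) x 1) * (-(β / l1)) := by field_simp; ring
      _ = β * e + (wordNorm (S : Set G) (x⁻¹ * 1) : ℝ) * (-(β / l1)) := by rfl
  calc Real.exp (-β * d x 1)
      ≤ Real.exp (β * e + (wordNorm (S : Set G) (x⁻¹ * 1) : ℝ) * (-(β / l1))) :=
        Real.exp_le_exp.2 this
    _ = Real.exp (β * e) * r ^ (wordNorm (S : Set G) (x⁻¹ * 1)) := by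
        rw [Real.exp_add, ← Real.exp_nat_mul]

end Theta
section MSet

variable {G : Type*} [Group G]

/-- The set of exponents where the Poincaré-type series converges. -/
def MSet (d d' : G → G → ℝ) (a : ℝ) : Set ℝ :=
  {b : ℝ | Summable (fun x : G => Real.exp (-(a * d' x 1) - b * d x 1))}

lemma manhattanTheta_eq (d d' : G → G → ℝ) (a : ℝ) :
    ManhattanTheta d d' a = sInf (MSet d d' a) := rfl

lemma MSet_upward {d d' : G → G → ℝ} (pd : IsPseudometric d) {a b b' : ℝ}
    (hb : b ∈ MSet d d' a) (h : b ≤ b') : b' ∈ MSet d d' a := by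
  refine hb.of_nonneg_of_le (fun x => (Real.exp_pos _).le) (fun x => ?_)
  apply Real.exp_le_exp.2
  have := mul_le_mul_of_nonneg_right h (pd.nonneg x 1)
  linarith

lemma MSet_nonempty {d d' : G → G → ℝ} (hd : InD d) (hd' : InD d') (a : ℝ) :
    (MSet d d' a).Nonempty := by
  obtain ⟨K, hK0, hK⟩ := hd.cross hd'
  obtain ⟨β, hβ0, hβ⟩ := hd.exists_summable_exp
  have pd' : IsPseudometric d' := hd'.1
  have pd : IsPseudometric d := hd.1
  refine ⟨|a| * K + β, ?_⟩
  refine ((hβ.mul_left (Real.exp (|a| * K))).of_nonneg_of_le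
    (fun x => (Real.exp_pos _).le) (fun x => ?_))
  rw [← Real.exp_add]
  apply Real.exp_le_exp.2
  have h1 : -(a * d' x 1) ≤ |a| * d' x 1 := by
    have := neg_abs_le (a * d' x 1)
    have h2 : |a * d' x 1| = |a| * d' x 1 := by
      rw [abs_mul, abs_of_nonneg (pd'.nonneg x 1)]
    linarith [neg_le_abs (a * d' x 1)]
  have h2 : d' x 1 ≤ K * d x 1 + K := hK x
  have hd0 : 0 ≤ d x 1 := pd.nonneg x 1
  nlinarith [mul_le_mul_of_nonneg_left h2 (abs_nonneg a)]

lemma MSet_bddBelow {d d' : G → G → ℝ} (hd : InD d) (hd' : InD d') (hne : NonElementary G)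
    (a : ℝ) : BddBelow (MSet d d' a) := by
  obtain ⟨K, hK0, hK⟩ := hd.cross hd'
  have pd' : IsPseudometric d' := hd'.1
  have pd : IsPseudometric d := hd.1
  have : Infinite G := hne.infinite
  refine ⟨-(|a| * K), fun b hb => ?_⟩
  by_contra hlt
  push_neg at hlt
  refine not_summable_of_lower (Real.exp_pos (-(|a| * K))) (fun x => ?_) hb
  apply Real.exp_le_exp.2
  have h1 : -|a| * d' x 1 ≤ -(a * d' x 1) := by
    have h2 : |a * d' x 1| = |a| * d' x 1 := by
      rw [abs_mul, abs_of_nonneg (pd'.nonneg x 1)]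
    linarith [le_abs_self (a * d' x 1)]
  have h2 : d' x 1 ≤ K * d x 1 + K := hK x
  have hd0 : 0 ≤ d x 1 := pd.nonneg x 1
  have h3 : -b * d x 1 ≥ |a| * K * d x 1 := by
    apply mul_le_mul_of_nonneg_right _ hd0
    linarith
  nlinarith [mul_le_mul_of_nonneg_left h2 (abs_nonneg a)]

lemma theta_le_of_mem {d d' : G → G → ℝ} (hd : InD d) (hd' : InD d') (hne : NonElementary G)
    {a b : ℝ} (hb : b ∈ MSet d d' a) : ManhattanTheta d d' a ≤ b :=
  csInf_le (MSet_bddBelow hd hd' hne a) hb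

lemma mem_of_theta_lt {d d' : G → G → ℝ} (hd : InD d) (hd' : InD d') (hne : NonElementary G)
    {a t : ℝ} (h : ManhattanTheta d d' a < t) : t ∈ MSet d d' a := by
  obtain ⟨b, hb, hbt⟩ := exists_lt_of_csInf_lt (MSet_nonempty hd hd' a) h
  exact MSet_upward hd.1 hb hbt.le

end MSet
section Compare

variable {G : Type*} [Group G]

lemma key_ineq {Λ C a t s : ℝ} (hΛ : 0 < Λ) (hC : 0 ≤ C) (ht : 0 ≤ t)
    (hlow : Λ⁻¹ * t - C ≤ s) (hup : s ≤ Λ * t + C) :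
    min (Λ*a) (Λ⁻¹*a) * t - |a| * C ≤ a * s := by
  rcases le_total 0 a with ha | ha
  · have h1 : a * (Λ⁻¹ * t - C) ≤ a * s := mul_le_mul_of_nonneg_left hlow ha
    have hm : min (Λ*a) (Λ⁻¹*a) * t ≤ (Λ⁻¹*a) * t :=
      mul_le_mul_of_nonneg_right (min_le_right _ _) ht
    rw [abs_of_nonneg ha]; nlinarith
  · have h1 : a * (Λ * t + C) ≤ a * s := mul_le_mul_of_nonpos_left hup ha
    have hm : min (Λ*a) (Λ⁻¹*a) * t ≤ (Λ*a) * t :=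
      mul_le_mul_of_nonneg_right (min_le_left _ _) ht
    rw [abs_of_nonpos ha]; nlinarith

lemma minmax {Λ : ℝ} (hΛ : 0 < Λ) (t : ℝ) :
    min (Λ * max (Λ*t) (Λ⁻¹*t)) (Λ⁻¹ * max (Λ*t) (Λ⁻¹*t)) = t := by
  rcases le_total (Λ*t) (Λ⁻¹*t) with h | h
  · rw [max_eq_right h]
    have h1 : Λ * (Λ⁻¹ * t) = t := by field_simp
    rw [h1]
    refine min_eq_left ?_
    have h2 : Λ⁻¹ * (Λ * t) ≤ Λ⁻¹ * (Λ⁻¹ * t) :=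
      mul_le_mul_of_nonneg_left h (inv_nonneg.2 hΛ.le)
    have h3 : Λ⁻¹ * (Λ * t) = t := by field_simp
    linarith
  · rw [max_eq_left h]
    have h1 : Λ⁻¹ * (Λ * t) = t := by field_simp
    rw [h1]
    refine min_eq_right ?_
    have h2 : Λ * (Λ⁻¹ * t) ≤ Λ * (Λ * t) := mul_le_mul_of_nonneg_left h hΛ.le
    have h3 : Λ * (Λ⁻¹ * t) = t := by field_simp
    linarith

lemma min_scale_mono {Λ s t : ℝ} (hΛ : 0 < Λ) (h : s ≤ t) :
    min (Λ*s) (Λ⁻¹*s) ≤ min (Λ*t) (Λ⁻¹*t) :=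
  min_le_min (mul_le_mul_of_nonneg_left h hΛ.le)
    (mul_le_mul_of_nonneg_left h (inv_nonneg.2 hΛ.le))

lemma summable_comp {d d' e e' : G → G → ℝ} (pd : IsPseudometric d) (pd' : IsPseudometric d')
    {Λ C : ℝ} (hΛ : 0 < Λ) (hC : 0 ≤ C)
    (h1 : ∀ x : G, Λ⁻¹ * d x 1 - C ≤ e x 1) (h2 : ∀ x : G, e x 1 ≤ Λ * d x 1 + C)
    (h1' : ∀ x : G, Λ⁻¹ * d' x 1 - C ≤ e' x 1) (h2' : ∀ x : G, e' x 1 ≤ Λ * d' x 1 + C)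
    {a b : ℝ}
    (hs : Summable (fun x : G =>
      Real.exp (-(min (Λ*a) (Λ⁻¹*a) * d' x 1) - min (Λ*b) (Λ⁻¹*b) * d x 1))) :
    Summable (fun x : G => Real.exp (-(a * e' x 1) - b * e x 1)) := by
  refine (hs.mul_left (Real.exp (|a| * C + |b| * C))).of_nonneg_of_le
    (fun x => (Real.exp_pos _).le) (fun x => ?_)
  rw [← Real.exp_add]
  apply Real.exp_le_exp.2
  have k1 : min (Λ*a) (Λ⁻¹*a) * d' x 1 - |a| * C ≤ a * e' x 1 :=
    key_ineq hΛ hC (pd'.nonneg x 1) (h1' x) (h2' x)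
  have k2 : min (Λ*b) (Λ⁻¹*b) * d x 1 - |b| * C ≤ b * e x 1 :=
    key_ineq hΛ hC (pd.nonneg x 1) (h1 x) (h2 x)
  linarith

/-- Core comparison: if `(e,e')` is `(Λ,C)`-bounded by `(d,d')`, then their Manhattan
curves compare. -/
lemma theta_key {d d' e e' : G → G → ℝ} (hd : InD d) (hd' : InD d')
    (he : InD e) (he' : InD e') (hne : NonElementary G)
    {Λ C : ℝ} (hΛ : 0 < Λ) (hC : 0 ≤ C)
    (h1 : ∀ x : G, Λ⁻¹ * d x 1 - C ≤ e x 1) (h2 : ∀ x : G, e x 1 ≤ Λ * d x 1 + C)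
    (h1' : ∀ x : G, Λ⁻¹ * d' x 1 - C ≤ e' x 1) (h2' : ∀ x : G, e' x 1 ≤ Λ * d' x 1 + C)
    (a t : ℝ) (ht : ManhattanTheta d d' (min (Λ*a) (Λ⁻¹*a)) < t) :
    ManhattanTheta e e' a ≤ max (Λ*t) (Λ⁻¹*t) := by
  have hsum : t ∈ MSet d d' (min (Λ*a) (Λ⁻¹*a)) := mem_of_theta_lt hd hd' hne ht
  have hmb : min (Λ * max (Λ*t) (Λ⁻¹*t)) (Λ⁻¹ * max (Λ*t) (Λ⁻¹*t)) = t := minmax hΛ t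
  have hmem : max (Λ*t) (Λ⁻¹*t) ∈ MSet e e' a := by
    refine summable_comp hd.1 hd'.1 hΛ hC h1 h2 h1' h2' ?_
    rw [hmb]
    exact hsum
  exact theta_le_of_mem he he' hne hmem

lemma le_max_scale {Λ u θ : ℝ} (hΛ : 0 < Λ)
    (h : ∀ t, θ < t → u ≤ max (Λ*t) (Λ⁻¹*t)) : u ≤ max (Λ*θ) (Λ⁻¹*θ) := by
  refine le_of_forall_pos_le_add (fun ε hε => ?_)
  have hμ : 0 < max Λ Λ⁻¹ := lt_of_lt_of_le hΛ (le_max_left _ _)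
  have hstep := h (θ + ε / max Λ Λ⁻¹) (by linarith [div_pos hε hμ])
  refine hstep.trans (max_le ?_ ?_)
  · have hΛμ : Λ * (ε / max Λ Λ⁻¹) ≤ ε := by
      have h1 : Λ * (ε / max Λ Λ⁻¹) ≤ max Λ Λ⁻¹ * (ε / max Λ Λ⁻¹) :=
        mul_le_mul_of_nonneg_right (le_max_left _ _) (by positivity)
      have h2 : max Λ Λ⁻¹ * (ε / max Λ Λ⁻¹) = ε := by field_simp
      linarith
    have : Λ * (θ + ε / max Λ Λ⁻¹) = Λ * θ + Λ * (ε / max Λ Λ⁻¹) := by ring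
    rw [this]
    exact add_le_add (le_max_left _ _) hΛμ
  · have hΛμ : Λ⁻¹ * (ε / max Λ Λ⁻¹) ≤ ε := by
      have h1 : Λ⁻¹ * (ε / max Λ Λ⁻¹) ≤ max Λ Λ⁻¹ * (ε / max Λ Λ⁻¹) :=
        mul_le_mul_of_nonneg_right (le_max_right _ _) (by positivity)
      have h2 : max Λ Λ⁻¹ * (ε / max Λ Λ⁻¹) = ε := by field_simp
      linarith
    have : Λ⁻¹ * (θ + ε / max Λ Λ⁻¹) = Λ⁻¹ * θ + Λ⁻¹ * (ε / max Λ Λ⁻¹) := by ring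
    rw [this]
    exact add_le_add (le_max_right _ _) hΛμ

end Compare
section DerivConv

/-- Pointwise convergence of convex differentiable functions implies convergence of
derivatives. -/
lemma deriv_tendsto_of_convex {fn : ℕ → ℝ → ℝ} {f : ℝ → ℝ}
    (hconvn : ∀ n, ConvexOn ℝ Set.univ (fn n)) (hdiffn : ∀ n, ContDiff ℝ 1 (fn n))
    (hconv : ConvexOn ℝ Set.univ f) (hdiff : ContDiff ℝ 1 f)
    (hptw : ∀ x : ℝ, Tendsto (fun n => fn n x) atTop (𝓝 (f x))) (a : ℝ) :
    Tendsto (fun n => deriv (fn n) a) atTop (𝓝 (deriv f a)) := by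
  have hfd : DifferentiableAt ℝ f a := (hdiff.differentiable one_ne_zero).differentiableAt
  refine Metric.tendsto_nhds.2 (fun ε hε => ?_)
  -- the slope of f tends to deriv f a
  have hslope : Tendsto (slope f a) (𝓝[≠] a) (𝓝 (deriv f a)) :=
    hasDerivAt_iff_tendsto_slope.1 hfd.hasDerivAt
  have hev : ∀ᶠ t in 𝓝[≠] a, dist (slope f a t) (deriv f a) < ε / 2 :=
    Metric.tendsto_nhds.1 hslope (ε/2) (by linarith)
  rw [eventually_nhdsWithin_iff, Metric.eventually_nhds_iff] at hev
  obtain ⟨δ, hδ, hδP⟩ := hev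
  set h : ℝ := δ / 2 with hh
  have hh0 : 0 < h := by positivity
  have hp : dist (slope f a (a + h)) (deriv f a) < ε/2 := by
    refine hδP (y := a + h) ?_ (by simp [Set.mem_compl_iff]; linarith)
    simp only [Real.dist_eq]
    rw [abs_of_pos (by linarith : (0:ℝ) < a + h - a)]
    linarith
  have hm : dist (slope f a (a - h)) (deriv f a) < ε/2 := by
    refine hδP (y := a - h) ?_ (by simp [Set.mem_compl_iff]; intro hc; linarith)
    simp only [Real.dist_eq]
    rw [abs_of_neg (by linarith : a - h - a < 0)]
    linarith
  have hsl_p : slope f a (a + h) = (f (a + h) - f a) / h := by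
    rw [slope_def_field, show a + h - a = h by ring]
  have hsl_m : slope f a (a - h) = (f a - f (a - h)) / h := by
    rw [slope_def_field, show a - h - a = -h by ring,
      show f (a - h) - f a = -(f a - f (a - h)) by ring, neg_div_neg_eq]
  rw [hsl_p, Real.dist_eq] at hp
  rw [hsl_m, Real.dist_eq] at hm
  have e1 := Metric.tendsto_nhds.1 (hptw (a + h)) (ε * h / 4) (by positivity)
  have e2 := Metric.tendsto_nhds.1 (hptw a) (ε * h / 4) (by positivity)
  have e3 := Metric.tendsto_nhds.1 (hptw (a - h)) (ε * h / 4) (by positivity)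
  filter_upwards [e1, e2, e3] with n h1 h2 h3
  rw [Real.dist_eq] at h1 h2 h3 ⊢
  have hnd : DifferentiableAt ℝ (fn n) a := ((hdiffn n).differentiable one_ne_zero).differentiableAt
  -- upper bound for deriv (fn n) a
  have hub : deriv (fn n) a ≤ slope (fn n) a (a + h) :=
    (hconvn n).deriv_le_slope (Set.mem_univ a) (Set.mem_univ (a+h)) (by linarith) hnd
  have hlb : slope (fn n) (a - h) a ≤ deriv (fn n) a :=
    (hconvn n).slope_le_deriv (Set.mem_univ (a-h)) (Set.mem_univ a) (by linarith) hnd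
  have hsl_p' : slope (fn n) a (a + h) = (fn n (a + h) - fn n a) / h := by
    rw [slope_def_field, show a + h - a = h by ring]
  have hsl_m' : slope (fn n) (a - h) a = (fn n a - fn n (a - h)) / h := by
    rw [slope_def_field, show a - (a - h) = h by ring]
  rw [hsl_p'] at hub
  rw [hsl_m'] at hlb
  -- combine
  have habs1 : |fn n (a+h) - f (a+h)| < ε * h / 4 := h1
  have habs2 : |fn n a - f a| < ε * h / 4 := h2
  have habs3 : |fn n (a-h) - f (a-h)| < ε * h / 4 := h3
  have b1 : fn n (a+h) - fn n a ≤ f (a+h) - f a + ε * h / 2 := by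
    have := abs_lt.1 habs1
    have := abs_lt.1 habs2
    linarith [this.1, this.2, (abs_lt.1 habs1).1, (abs_lt.1 habs1).2]
  have b2 : f a - f (a-h) - ε * h / 2 ≤ fn n a - fn n (a-h) := by
    linarith [(abs_lt.1 habs2).1, (abs_lt.1 habs2).2, (abs_lt.1 habs3).1, (abs_lt.1 habs3).2]
  have c1 : (fn n (a+h) - fn n a) / h ≤ (f (a+h) - f a) / h + ε / 2 := by
    rw [div_add' _ _ _ (ne_of_gt hh0)]
    refine (div_le_div_iff_of_pos_right hh0).2 ?_
    have : ε / 2 * h = ε * h / 2 := by ring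
    linarith [b1]
  have c2 : (f a - f (a-h)) / h - ε / 2 ≤ (fn n a - fn n (a-h)) / h := by
    rw [div_sub' (ne_of_gt hh0)]
    refine (div_le_div_iff_of_pos_right hh0).2 ?_
    have : ε / 2 * h = ε * h / 2 := by ring
    linarith [b2]
  have hup : deriv (fn n) a < deriv f a + ε := by
    have := abs_lt.1 hp
    calc deriv (fn n) a ≤ (fn n (a+h) - fn n a) / h := hub
      _ ≤ (f (a+h) - f a) / h + ε / 2 := c1
      _ < deriv f a + ε := by linarith [this.1, this.2]
  have hdown : deriv f a - ε < deriv (fn n) a := by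
    have := abs_lt.1 hm
    calc deriv f a - ε < (f a - f (a-h)) / h - ε / 2 := by linarith [this.1, this.2]
      _ ≤ (fn n a - fn n (a-h)) / h := c2
      _ ≤ deriv (fn n) a := hlb
  rw [abs_lt]
  constructor <;> linarith

end DerivConv

/-- If `Λ_n⁻¹d − C_n ≤ d_n ≤ Λ_n d + C_n` and similarly for `d'`,
with `Λ_n → 1` and `C_n ≥ 0`, and all Manhattan curves `Θ_n`, `Θ` are convex and
continuously differentiable, then `Θ_n → Θ` and `Θ'_n → Θ'` pointwise. -/
theorem manhattan_curve_convergence (G : Type*) [Group G]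
    (hG : IsHyperbolicGroup G) (hne : NonElementary G)
    (d d' : G → G → ℝ) (hd : InD d) (hd' : InD d')
    (dn dn' : ℕ → (G → G → ℝ)) (hdn : ∀ n, InD (dn n) ∧ InD (dn' n))
    (Λs Cs : ℕ → ℝ) (hΛ : Tendsto Λs atTop (𝓝 1)) (hΛpos : ∀ n, 0 < Λs n)
    (hCs : ∀ n, 0 ≤ Cs n)
    (hb : ∀ (n : ℕ) (x y : G),
      (Λs n)⁻¹ * d x y - Cs n ≤ dn n x y ∧ dn n x y ≤ Λs n * d x y + Cs n)
    (hb' : ∀ (n : ℕ) (x y : G),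
      (Λs n)⁻¹ * d' x y - Cs n ≤ dn' n x y ∧ dn' n x y ≤ Λs n * d' x y + Cs n)
    (hconvn : ∀ n, ConvexOn ℝ Set.univ (ManhattanTheta (dn n) (dn' n)))
    (hdiffn : ∀ n, ContDiff ℝ 1 (ManhattanTheta (dn n) (dn' n)))
    (hconv : ConvexOn ℝ Set.univ (ManhattanTheta d d'))
    (hdiff : ContDiff ℝ 1 (ManhattanTheta d d')) :
    (∀ a : ℝ, Tendsto (fun n => ManhattanTheta (dn n) (dn' n) a) atTop
        (𝓝 (ManhattanTheta d d' a))) ∧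
    (∀ a : ℝ, Tendsto (fun n => deriv (ManhattanTheta (dn n) (dn' n)) a) atTop
        (𝓝 (deriv (ManhattanTheta d d') a))) := by
  set Θ : ℝ → ℝ := ManhattanTheta d d' with hΘdef
  set Θn : ℕ → ℝ → ℝ := fun n => ManhattanTheta (dn n) (dn' n) with hΘndef
  -- upper bound : Θn n a ≤ max (Λ * Θ (min (Λa) (Λ⁻¹a))) (Λ⁻¹ * Θ (min ...))
  have key1 : ∀ n a, Θn n a ≤
      max (Λs n * Θ (min (Λs n * a) ((Λs n)⁻¹ * a)))
        ((Λs n)⁻¹ * Θ (min (Λs n * a) ((Λs n)⁻¹ * a))) := by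
    intro n a
    refine le_max_scale (hΛpos n) (fun t ht => ?_)
    exact theta_key hd hd' (hdn n).1 (hdn n).2 hne (hΛpos n) (hCs n)
      (fun x => (hb n x 1).1) (fun x => (hb n x 1).2)
      (fun x => (hb' n x 1).1) (fun x => (hb' n x 1).2) a t ht
  -- reversed bounds : d in terms of dn with constants (Λ, C * max Λ Λ⁻¹)
  have key2 : ∀ n a, Θ (max (Λs n * a) ((Λs n)⁻¹ * a)) ≤
      max (Λs n * Θn n a) ((Λs n)⁻¹ * Θn n a) := by
    intro n a
    set Λ := Λs n with hΛn
    set C := Cs n with hCn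
    have hΛ0 : 0 < Λ := hΛpos n
    have hC0 : 0 ≤ C := hCs n
    set C' : ℝ := C * max Λ Λ⁻¹ with hC'
    have hμ0 : 0 < max Λ Λ⁻¹ := lt_of_lt_of_le hΛ0 (le_max_left _ _)
    have hC'0 : 0 ≤ C' := mul_nonneg hC0 hμ0.le
    have hΛC : Λ * C ≤ C' := by
      rw [hC']
      calc Λ * C = C * Λ := by ring
        _ ≤ C * max Λ Λ⁻¹ := mul_le_mul_of_nonneg_left (le_max_left _ _) hC0
    have hΛiC : Λ⁻¹ * C ≤ C' := by
      rw [hC']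
      calc Λ⁻¹ * C = C * Λ⁻¹ := by ring
        _ ≤ C * max Λ Λ⁻¹ := mul_le_mul_of_nonneg_left (le_max_right _ _) hC0
    have rev : ∀ (e en : G → G → ℝ),
        (∀ x y : G, Λ⁻¹ * e x y - C ≤ en x y ∧ en x y ≤ Λ * e x y + C) →
        (∀ x : G, Λ⁻¹ * en x 1 - C' ≤ e x 1 ∧ e x 1 ≤ Λ * en x 1 + C') := by
      intro e en hen x
      obtain ⟨hl, hu⟩ := hen x 1
      constructor
      · have h1 : Λ⁻¹ * en x 1 ≤ Λ⁻¹ * (Λ * e x 1 + C) :=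
          mul_le_mul_of_nonneg_left hu (inv_nonneg.2 hΛ0.le)
        have h2 : Λ⁻¹ * (Λ * e x 1 + C) = e x 1 + Λ⁻¹ * C := by field_simp
        linarith
      · have h1 : Λ * (Λ⁻¹ * e x 1 - C) ≤ Λ * en x 1 := mul_le_mul_of_nonneg_left hl hΛ0.le
        have h2 : Λ * (Λ⁻¹ * e x 1 - C) = e x 1 - Λ * C := by field_simp
        linarith
    refine le_max_scale hΛ0 (fun t ht => ?_)
    have hmin : min (Λ * max (Λ * a) (Λ⁻¹ * a)) (Λ⁻¹ * max (Λ * a) (Λ⁻¹ * a)) = a :=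
      minmax hΛ0 a
    refine theta_key (hdn n).1 (hdn n).2 hd hd' hne hΛ0 hC'0
      (fun x => (rev d (dn n) (hb n) x).1) (fun x => (rev d (dn n) (hb n) x).2)
      (fun x => (rev d' (dn' n) (hb' n) x).1) (fun x => (rev d' (dn' n) (hb' n) x).2)
      (max (Λ * a) (Λ⁻¹ * a)) t ?_
    rw [hmin]
    exact ht
  -- lower bound for Θn
  have key3 : ∀ n a,
      min (Λs n * Θ (max (Λs n * a) ((Λs n)⁻¹ * a)))
        ((Λs n)⁻¹ * Θ (max (Λs n * a) ((Λs n)⁻¹ * a))) ≤ Θn n a := by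
    intro n a
    have := min_scale_mono (hΛpos n) (key2 n a)
    rwa [minmax (hΛpos n) (Θn n a)] at this
  -- limits
  have hΛinv : Tendsto (fun n => (Λs n)⁻¹) atTop (𝓝 1) := by
    have := hΛ.inv₀ (one_ne_zero)
    simpa using this
  have hcont : Continuous Θ := hdiff.continuous
  have hptw : ∀ a : ℝ, Tendsto (fun n => Θn n a) atTop (𝓝 (Θ a)) := by
    intro a
    have hmin : Tendsto (fun n => min (Λs n * a) ((Λs n)⁻¹ * a)) atTop (𝓝 a) := by
      have := (hΛ.mul_const a).min (hΛinv.mul_const a)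
      simpa using this
    have hmax : Tendsto (fun n => max (Λs n * a) ((Λs n)⁻¹ * a)) atTop (𝓝 a) := by
      have := (hΛ.mul_const a).max (hΛinv.mul_const a)
      simpa using this
    have hθmin : Tendsto (fun n => Θ (min (Λs n * a) ((Λs n)⁻¹ * a))) atTop (𝓝 (Θ a)) :=
      (hcont.tendsto a).comp hmin
    have hθmax : Tendsto (fun n => Θ (max (Λs n * a) ((Λs n)⁻¹ * a))) atTop (𝓝 (Θ a)) :=
      (hcont.tendsto a).comp hmax
    have hupper : Tendsto (fun n => max (Λs n * Θ (min (Λs n * a) ((Λs n)⁻¹ * a)))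
        ((Λs n)⁻¹ * Θ (min (Λs n * a) ((Λs n)⁻¹ * a)))) atTop (𝓝 (Θ a)) := by
      have := (hΛ.mul hθmin).max (hΛinv.mul hθmin)
      simpa using this
    have hlower : Tendsto (fun n => min (Λs n * Θ (max (Λs n * a) ((Λs n)⁻¹ * a)))
        ((Λs n)⁻¹ * Θ (max (Λs n * a) ((Λs n)⁻¹ * a)))) atTop (𝓝 (Θ a)) := by
      have := (hΛ.mul hθmax).min (hΛinv.mul hθmax)
      simpa using this
    exact tendsto_of_tendsto_of_tendsto_of_le_of_le hlower hupper
      (fun n => key3 n a) (fun n => key1 n a)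
  refine ⟨hptw, fun a => ?_⟩
  exact deriv_tendsto_of_convex hconvn hdiffn hconv hdiff hptw a
end
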